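/- Let H be a torsion-free Hopf algebra over C[q,q⁻¹], J := ker(ε : H → C[q,q⁻¹]), and H^∨ := Σ_{n≥0} (q−1)^{−n} Jⁿ inside H ⊗ C(q). Let I_q ⊆ H be a left ideal and two-sided coideal, and set I_q^∨ := Σ_{n≥1} (q−1)^{−n} J^{n−1} I_q. Then I_q^∨ is a left ideal and two-sided coideal of H^∨. -/

import Mathlib

set_option synthInstance.maxHeartbeats 1000000
set_option maxHeartbeats 1000000
set_option maxRecDepth 8000
set_option linter.unusedSectionVars false
set_option linter.unusedVariables false

/- STATEMENT 14: for a torsion-free Hopf algebra H over ℂ[q,q⁻¹] (realized as an integral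
   form of a Hopf algebra A over ℂ(q)) with J = ker ε and H^∨ = Σ_n (q−1)^{−n}Jⁿ, and a left
   ideal and two-sided coideal I_q ⊆ H, the module I_q^∨ := Σ_{n≥1}(q−1)^{−n}J^{n−1}I_q is a
   left ideal and two-sided coideal of H^∨. -/

open scoped TensorProduct
open PiTensorProduct

namespace GQDP

/-- The ground ring `ℂ[q,q⁻¹]` of complex Laurent polynomials. -/
abbrev R : Type := LaurentPolynomial ℂ

/-- The field `ℂ(q)` of rational functions, realized as the fraction field of `ℂ[q,q⁻¹]`. -/
abbrev K : Type := FractionRing R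

/-- The indeterminate `q`, as an element of `ℂ[q,q⁻¹]`. -/
noncomputable def q : R := LaurentPolynomial.T 1

/-- The indeterminate `q`, as an element of `ℂ(q)`. -/
noncomputable def qK : K := algebraMap R K q

/- `A` is a Hopf algebra over `ℂ(q)` (playing the role of `H ⊗_{ℂ[q,q⁻¹]} ℂ(q)`), in which
   all the `ℂ[q,q⁻¹]`-integral forms below live as `R`-submodules. -/
variable (A : Type*) [Ring A] [HopfAlgebra K A] [Algebra R A] [IsScalarTower R K A]

/-- Scaling of an `R`-submodule of `A` by a scalar `c ∈ ℂ(q)`. -/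
noncomputable def ksmul (c : K) (p : Submodule R A) : Submodule R A :=
  Submodule.span R ((fun a => c • a) '' (p : Set A))

/-- The "tensor product" of two `R`-submodules of `A` inside `A ⊗[ℂ(q)] A`: the additive
    subgroup generated by the corresponding pure tensors (this is also their `R`-span). -/
noncomputable def tsubK (P Q : Submodule R A) : AddSubgroup (A ⊗[K] A) :=
  AddSubgroup.closure {z | ∃ p ∈ P, ∃ r ∈ Q, z = p ⊗ₜ[K] r}

/-- The augmentation ideal `J := H ∩ ker ε` of an integral form `H ⊆ A`. -/
noncomputable def Jform (H : Submodule R A) : Submodule R A :=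
  H ⊓ (LinearMap.ker (Coalgebra.counit : A →ₗ[K] K)).restrictScalars R

/-- Drinfeld's algebra `H^∨ := Σ_{n≥0} (q−1)^{−n} Jⁿ`. -/
noncomputable def Hvee (H : Submodule R A) : Submodule R A :=
  ⨆ n : ℕ, ksmul A (((qK - 1)⁻¹) ^ n) ((Jform A H) ^ n)

/-- `H` is a Hopf-algebra integral form of `A` over `ℂ[q,q⁻¹]`: a unital `R`-subalgebra,
    with `Δ(H) ⊆ H ⊗ H`, `ε(H) ⊆ ℂ[q,q⁻¹]` and `S(H) ⊆ H`. -/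
structure IsHopfForm (H : Submodule R A) : Prop where
  one_mem : (1 : A) ∈ H
  mul_mem : ∀ x ∈ H, ∀ y ∈ H, x * y ∈ H
  comul_mem : ∀ x ∈ H, Coalgebra.comul (R := K) x ∈ tsubK A H H
  counit_mem : ∀ x ∈ H, ∃ r : R, Coalgebra.counit (R := K) x = algebraMap R K r
  antipode_mem : ∀ x ∈ H, HopfAlgebra.antipode (R := K) x ∈ H

/-- `I^∨ := Σ_{n≥1} (q−1)^{−n} J^{n−1}·I`. -/
noncomputable def Ivee (H I : Submodule R A) : Submodule R A :=
  ⨆ n : ℕ, ksmul A (((qK - 1)⁻¹) ^ (n + 1)) (((Jform A H) ^ n) * I)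

lemma q_ne_one : q ≠ 1 := by
  intro h
  have := congrArg (fun p : R => p.coeff 1) h
  simp only [q, LaurentPolynomial.T_apply] at this
  rw [show (1 : R) = LaurentPolynomial.T 0 from (LaurentPolynomial.T_zero).symm,
    LaurentPolynomial.T_apply] at this
  simp at this

lemma qK_ne_one : qK ≠ 1 := by
  rw [qK, show (1 : K) = algebraMap R K 1 from (_root_.map_one _).symm]
  exact fun h => q_ne_one (IsFractionRing.injective R K h)

lemma g_mul_c : (qK - 1) * (qK - 1)⁻¹ = 1 :=
  mul_inv_cancel₀ (sub_ne_zero.mpr qK_ne_one)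

lemma qK_sub_one_eq : qK - 1 = algebraMap R K (q - 1) := by
  rw [map_sub, _root_.map_one, qK]

lemma ksmul_eq_map (c : K) (P : Submodule R A) :
    ksmul A c P = P.map ((c • (LinearMap.id : A →ₗ[K] A)).restrictScalars R) := by
  rw [ksmul, ← Submodule.span_eq (P.map _)]
  congr 1

lemma smul_mem_ksmul (c : K) {P : Submodule R A} {p : A} (hp : p ∈ P) :
    c • p ∈ ksmul A c P :=
  Submodule.subset_span ⟨p, hp, rfl⟩

lemma mem_ksmul_iff {c : K} {P : Submodule R A} {x : A} :
    x ∈ ksmul A c P ↔ ∃ p ∈ P, c • p = x := by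
  rw [ksmul_eq_map]
  simp [Submodule.mem_map]

lemma ksmul_mul_ksmul (c d : K) (P Q : Submodule R A) :
    ksmul A c P * ksmul A d Q ≤ ksmul A (c * d) (P * Q) := by
  rw [Submodule.mul_le]
  intro m hm n hn
  obtain ⟨p, hp, rfl⟩ := (mem_ksmul_iff A).mp hm
  obtain ⟨r, hr, rfl⟩ := (mem_ksmul_iff A).mp hn
  have : (c • p) * (d • r) = (c * d) • (p * r) := by
    rw [smul_mul_assoc, mul_smul_comm]
    exact smul_smul c d (p * r)
  rw [this]
  exact smul_mem_ksmul A _ (Submodule.mul_mem_mul hp hr)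

lemma Jform_le (H : Submodule R A) : Jform A H ≤ H := inf_le_left

lemma counit_Jform {H : Submodule R A} {x : A} (hx : x ∈ Jform A H) :
    Coalgebra.counit (R := K) x = 0 := hx.2

/-- the projection `x ↦ x - ε(x)•1`. -/
noncomputable def piL : A →ₗ[K] A :=
  LinearMap.id - (Algebra.linearMap K A) ∘ₗ (Coalgebra.counit : A →ₗ[K] K)

lemma piL_apply (x : A) :
    piL A x = x - Coalgebra.counit (R := K) x • (1 : A) := by
  simp [piL, Algebra.algebraMap_eq_smul_one]

lemma piL_mem_Jform {H : Submodule R A} (hH : IsHopfForm A H) {x : A} (hx : x ∈ H) :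
    piL A x ∈ Jform A H := by
  obtain ⟨r, hr⟩ := hH.counit_mem x hx
  constructor
  · rw [piL_apply, hr,
      show (algebraMap R K r) • (1 : A) = r • (1 : A) from algebraMap_smul K r (1 : A)]
    exact sub_mem hx (Submodule.smul_mem _ r hH.one_mem)
  · show Coalgebra.counit (R := K) (piL A x) = 0
    simp [piL_apply, smul_eq_mul]

lemma map_piL_comul (x : A) :
    TensorProduct.map (piL A) (piL A) (Coalgebra.comul (R := K) x)
      = Coalgebra.comul (R := K) x - (1 : A) ⊗ₜ[K] x - x ⊗ₜ[K] (1 : A)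
        + Coalgebra.counit (R := K) x • ((1 : A) ⊗ₜ[K] (1 : A)) := by
  set u : K →ₗ[K] A := Algebra.linearMap K A with hu
  set e : A →ₗ[K] K := Coalgebra.counit with he
  have key : TensorProduct.map (piL A) (piL A) =
      LinearMap.id - TensorProduct.map (u ∘ₗ e) LinearMap.id
        - TensorProduct.map LinearMap.id (u ∘ₗ e)
        + TensorProduct.map (u ∘ₗ e) (u ∘ₗ e) := by
    apply TensorProduct.ext'
    intro a b
    simp only [LinearMap.sub_apply, LinearMap.add_apply, TensorProduct.map_tmul,
      LinearMap.id_apply, LinearMap.id_coe, id_eq, piL, LinearMap.coe_comp,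
      Function.comp_apply, LinearMap.sub_apply]
    simp only [TensorProduct.tmul_sub, TensorProduct.sub_tmul]
    abel
  have e1 : TensorProduct.map (u ∘ₗ e) LinearMap.id (Coalgebra.comul (R := K) x)
      = (1 : A) ⊗ₜ[K] x := by
    have comp1 : TensorProduct.map u LinearMap.id ∘ₗ
        LinearMap.rTensor A e = TensorProduct.map (u ∘ₗ e) LinearMap.id := by
      apply TensorProduct.ext'
      intro a b
      simp [LinearMap.rTensor_tmul]
    rw [← comp1, LinearMap.comp_apply, he, Coalgebra.rTensor_counit_comul]
    simp [hu]
  have e2 : TensorProduct.map LinearMap.id (u ∘ₗ e) (Coalgebra.comul (R := K) x)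
      = x ⊗ₜ[K] (1 : A) := by
    have comp2 : TensorProduct.map LinearMap.id u ∘ₗ
        LinearMap.lTensor A e = TensorProduct.map LinearMap.id (u ∘ₗ e) := by
      apply TensorProduct.ext'
      intro a b
      simp [LinearMap.lTensor_tmul]
    rw [← comp2, LinearMap.comp_apply, he, Coalgebra.lTensor_counit_comul]
    simp [hu]
  have e3 : TensorProduct.map (u ∘ₗ e) (u ∘ₗ e) (Coalgebra.comul (R := K) x)
      = Coalgebra.counit (R := K) x • ((1 : A) ⊗ₜ[K] (1 : A)) := by
    have comp3 : TensorProduct.map (u ∘ₗ e) (u ∘ₗ e)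
        = TensorProduct.map (u ∘ₗ e) LinearMap.id ∘ₗ
            TensorProduct.map LinearMap.id (u ∘ₗ e) := by
      apply TensorProduct.ext'
      intro a b
      simp
    rw [comp3, LinearMap.comp_apply, e2]
    simp only [TensorProduct.map_tmul, LinearMap.id_apply, LinearMap.coe_comp,
      Function.comp_apply, hu, he, Algebra.linearMap_apply,
      Algebra.algebraMap_eq_smul_one]
    rw [TensorProduct.smul_tmul']
  rw [key]
  simp only [LinearMap.sub_apply, LinearMap.add_apply, LinearMap.id_apply, e1, e2, e3]
  rfl


lemma one_mem_one : (1 : A) ∈ (1 : Submodule R A) := by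
  rw [Submodule.one_eq_span]
  exact Submodule.mem_span_singleton_self 1

/-- bidegree-filtered tensors of powers of `J`. -/
noncomputable def V (H : Submodule R A) (n : ℕ) : AddSubgroup (A ⊗[K] A) :=
  AddSubgroup.closure {z | ∃ a b : ℕ, n ≤ a + b ∧
    ∃ u ∈ (Jform A H) ^ a, ∃ v ∈ (Jform A H) ^ b, z = u ⊗ₜ[K] v}

/-- bidegree-filtered tensors with one factor involving `I`. -/
noncomputable def W (H I : Submodule R A) (n : ℕ) : AddSubgroup (A ⊗[K] A) :=
  AddSubgroup.closure {z | ∃ a b : ℕ, n ≤ a + b ∧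
    ((∃ u ∈ (Jform A H) ^ a, ∃ v ∈ (Jform A H) ^ b * I, z = u ⊗ₜ[K] v) ∨
     (∃ u ∈ (Jform A H) ^ a * I, ∃ v ∈ (Jform A H) ^ b, z = u ⊗ₜ[K] v))}

lemma comul_Jform_mem_V {H : Submodule R A} (hH : IsHopfForm A H) {j : A}
    (hj : j ∈ Jform A H) : Coalgebra.comul (R := K) j ∈ V A H 1 := by
  have hjH : j ∈ H := hj.1
  have hje : Coalgebra.counit (R := K) j = 0 := hj.2
  have hrepr : Coalgebra.comul (R := K) j
      = TensorProduct.map (piL A) (piL A) (Coalgebra.comul (R := K) j)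
        + (1 : A) ⊗ₜ[K] j + j ⊗ₜ[K] (1 : A) := by
    rw [map_piL_comul, hje,
      show (0 : K) • ((1 : A) ⊗ₜ[K] (1 : A)) = 0 by
        rw [TensorProduct.smul_tmul',
          show (0 : K) • (1 : A) = 0 by rw [Algebra.smul_def, map_zero, zero_mul],
          TensorProduct.zero_tmul]]
    abel
  rw [hrepr]
  have h1 : TensorProduct.map (piL A) (piL A) (Coalgebra.comul (R := K) j) ∈ V A H 1 := by
    have hm := hH.comul_mem j hjH
    refine AddSubgroup.closure_induction (fun z hz => ?_) ?_ ?_ ?_ hm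
    · obtain ⟨p, hp, r, hr, rfl⟩ := hz
      rw [TensorProduct.map_tmul]
      exact AddSubgroup.subset_closure ⟨1, 1, by omega,
        piL A p, by rw [pow_one]; exact piL_mem_Jform A hH hp,
        piL A r, by rw [pow_one]; exact piL_mem_Jform A hH hr, rfl⟩
    · rw [map_zero]; exact zero_mem _
    · intro x y _ _ hx hy
      rw [map_add]; exact add_mem hx hy
    · intro x _ hx
      rw [map_neg]; exact neg_mem hx
  have h2 : (1 : A) ⊗ₜ[K] j ∈ V A H 1 :=
    AddSubgroup.subset_closure ⟨0, 1, by omega, 1, by rw [pow_zero]; exact one_mem_one A,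
      j, by rw [pow_one]; exact hj, rfl⟩
  have h3 : j ⊗ₜ[K] (1 : A) ∈ V A H 1 :=
    AddSubgroup.subset_closure ⟨1, 0, by omega, j, by rw [pow_one]; exact hj,
      1, by rw [pow_zero]; exact one_mem_one A, rfl⟩
  exact add_mem (add_mem h1 h2) h3

lemma V_mul_W {H I : Submodule R A} {m n : ℕ} {z w : A ⊗[K] A}
    (hz : z ∈ V A H m) (hw : w ∈ W A H I n) : z * w ∈ W A H I (m + n) := by
  suffices h : V A H m ≤ (W A H I (m + n)).comap (AddMonoidHom.mulRight w) by
    simpa [AddSubgroup.mem_comap] using h hz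
  refine (AddSubgroup.closure_le _).mpr ?_
  rintro z ⟨a, b, hab, u, hu, v, hv, rfl⟩
  simp only [SetLike.mem_coe, AddSubgroup.mem_comap, AddMonoidHom.coe_mulRight]
  suffices h2 : W A H I n ≤ (W A H I (m + n)).comap
      (AddMonoidHom.mulLeft (u ⊗ₜ[K] v)) by
    simpa [AddSubgroup.mem_comap] using h2 hw
  refine (AddSubgroup.closure_le _).mpr ?_
  rintro w' ⟨a', b', hab', hw'⟩
  simp only [SetLike.mem_coe, AddSubgroup.mem_comap, AddMonoidHom.coe_mulLeft]
  rcases hw' with ⟨u', hu', v', hv', rfl⟩ | ⟨u', hu', v', hv', rfl⟩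
  · rw [Algebra.TensorProduct.tmul_mul_tmul]
    have huu : u * u' ∈ (Jform A H) ^ (a + a') := by
      rw [pow_add]; exact Submodule.mul_mem_mul hu hu'
    have hvv : v * v' ∈ (Jform A H) ^ (b + b') * I := by
      have := Submodule.mul_mem_mul hv hv'
      rwa [← mul_assoc, ← pow_add] at this
    exact AddSubgroup.subset_closure ⟨a + a', b + b', by omega,
      Or.inl ⟨u * u', huu, v * v', hvv, rfl⟩⟩
  · rw [Algebra.TensorProduct.tmul_mul_tmul]
    have huu : u * u' ∈ (Jform A H) ^ (a + a') * I := by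
      have := Submodule.mul_mem_mul hu hu'
      rwa [← mul_assoc, ← pow_add] at this
    have hvv : v * v' ∈ (Jform A H) ^ (b + b') := by
      rw [pow_add]; exact Submodule.mul_mem_mul hv hv'
    exact AddSubgroup.subset_closure ⟨a + a', b + b', by omega,
      Or.inr ⟨u * u', huu, v * v', hvv, rfl⟩⟩


lemma comul_JnI {H I : Submodule R A} (hH : IsHopfForm A H)
    (hcoideal : ∀ x ∈ I, Coalgebra.comul (R := K) x ∈ tsubK A H I ⊔ tsubK A I H) :
    ∀ n : ℕ, ∀ z ∈ (Jform A H) ^ n * I, Coalgebra.comul (R := K) z ∈ W A H I n := by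
  intro n
  induction n with
  | zero =>
    intro z hz
    have hz' : z ∈ I := by rwa [pow_zero, one_mul] at hz
    have hHI : tsubK A H I ≤ W A H I 0 := by
      refine (AddSubgroup.closure_le _).mpr ?_
      rintro t ⟨h, hh, x, hx, rfl⟩
      obtain ⟨r, hr⟩ := hH.counit_mem h hh
      have hsplit : h ⊗ₜ[K] x = (r • (1 : A)) ⊗ₜ[K] x + (piL A h) ⊗ₜ[K] x := by
        rw [← TensorProduct.add_tmul]
        congr 1
        rw [piL_apply, hr,
          show algebraMap R K r • (1 : A) = r • (1 : A) from algebraMap_smul K r (1 : A)]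
        abel
      rw [SetLike.mem_coe, hsplit]
      have hx0 : x ∈ (Jform A H) ^ 0 * I := by rw [pow_zero, one_mul]; exact hx
      refine add_mem (AddSubgroup.subset_closure ⟨0, 0, by omega,
        Or.inl ⟨r • (1 : A), by rw [pow_zero]; exact Submodule.smul_mem _ r (one_mem_one A),
          x, hx0, rfl⟩⟩) (AddSubgroup.subset_closure ⟨1, 0, by omega,
        Or.inl ⟨piL A h, by rw [pow_one]; exact piL_mem_Jform A hH hh, x, hx0, rfl⟩⟩)
    have hIH' : tsubK A I H ≤ W A H I 0 := by
      refine (AddSubgroup.closure_le _).mpr ?_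
      rintro t ⟨x, hx, h, hh, rfl⟩
      obtain ⟨r, hr⟩ := hH.counit_mem h hh
      have hsplit : x ⊗ₜ[K] h = x ⊗ₜ[K] (r • (1 : A)) + x ⊗ₜ[K] (piL A h) := by
        rw [← TensorProduct.tmul_add]
        congr 1
        rw [piL_apply, hr,
          show algebraMap R K r • (1 : A) = r • (1 : A) from algebraMap_smul K r (1 : A)]
        abel
      rw [SetLike.mem_coe, hsplit]
      have hx0 : x ∈ (Jform A H) ^ 0 * I := by rw [pow_zero, one_mul]; exact hx
      refine add_mem (AddSubgroup.subset_closure ⟨0, 0, by omega,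
        Or.inr ⟨x, hx0, r • (1 : A), by rw [pow_zero]; exact Submodule.smul_mem _ r (one_mem_one A),
          rfl⟩⟩) (AddSubgroup.subset_closure ⟨0, 1, by omega,
        Or.inr ⟨x, hx0, piL A h, by rw [pow_one]; exact piL_mem_Jform A hH hh, rfl⟩⟩)
    exact (sup_le hHI hIH') (hcoideal z hz')
  | succ n ih =>
    intro z hz
    have hfac : (Jform A H) ^ (n + 1) * I = Jform A H * ((Jform A H) ^ n * I) := by
      rw [pow_succ', mul_assoc]
    rw [hfac] at hz
    refine Submodule.mul_induction_on hz (fun j hj w hw => ?_) (fun x y hx hy => ?_)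
    · rw [Bialgebra.comul_mul]
      have := V_mul_W A (comul_Jform_mem_V A hH hj) (ih w hw)
      rwa [show 1 + n = n + 1 by omega] at this
    · rw [map_add]; exact add_mem hx hy

lemma smul_mem_Hvee {H : Submodule R A} {a : ℕ} {u : A} (hu : u ∈ (Jform A H) ^ a) :
    ((qK - 1)⁻¹) ^ a • u ∈ Hvee A H :=
  (le_iSup (fun n => ksmul A (((qK - 1)⁻¹) ^ n) ((Jform A H) ^ n)) a)
    (smul_mem_ksmul A _ hu)

lemma smul_mem_Ivee {H I : Submodule R A} {b : ℕ} {v : A}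
    (hv : v ∈ (Jform A H) ^ b * I) :
    ((qK - 1)⁻¹) ^ (b + 1) • v ∈ Ivee A H I :=
  (le_iSup (fun n => ksmul A (((qK - 1)⁻¹) ^ (n + 1)) ((Jform A H) ^ n * I)) b)
    (smul_mem_ksmul A _ hv)

lemma gpow_smul_mem {P : Submodule R A} {x : A} (hx : x ∈ P) (k : ℕ) :
    (qK - 1) ^ k • x ∈ P := by
  have : (qK - 1) ^ k • x = ((q - 1) ^ k : R) • x := by
    rw [qK_sub_one_eq, ← map_pow]
    exact algebraMap_smul K ((q - 1) ^ k) x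
  rw [this]
  exact Submodule.smul_mem _ _ hx

lemma smul_W_mem {H I : Submodule R A} (n : ℕ) {t : A ⊗[K] A} (ht : t ∈ W A H I n) :
    ((qK - 1)⁻¹) ^ (n + 1) • t ∈
      tsubK A (Hvee A H) (Ivee A H I) ⊔ tsubK A (Ivee A H I) (Hvee A H) := by
  set c : K := (qK - 1)⁻¹ with hc
  set S := tsubK A (Hvee A H) (Ivee A H I) ⊔ tsubK A (Ivee A H I) (Hvee A H) with hS
  suffices h : W A H I n ≤ S.comap (DistribMulAction.toAddMonoidHom (A ⊗[K] A) (c ^ (n + 1))) by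
    exact (AddSubgroup.mem_comap).mp (h ht)
  refine (AddSubgroup.closure_le _).mpr ?_
  rintro t ⟨a, b, hab, hgen⟩
  rw [SetLike.mem_coe, AddSubgroup.mem_comap]
  set k := a + b - n with hk
  have hsc : (((qK - 1) ^ k * c ^ a) * c ^ (b + 1)) = c ^ (n + 1) := by
    have h1 : a + (b + 1) = k + (n + 1) := by omega
    rw [mul_assoc, ← pow_add, h1, pow_add, ← mul_assoc, ← mul_pow, g_mul_c, one_pow, one_mul]
  have hsc2 : (((qK - 1) ^ k * c ^ b) * c ^ (a + 1)) = c ^ (n + 1) := by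
    have h1 : b + (a + 1) = k + (n + 1) := by omega
    rw [mul_assoc, ← pow_add, h1, pow_add, ← mul_assoc, ← mul_pow, g_mul_c, one_pow, one_mul]
  rcases hgen with ⟨u, hu, v, hv, rfl⟩ | ⟨u, hu, v, hv, rfl⟩
  · have key : c ^ (n + 1) • (u ⊗ₜ[K] v)
        = (((qK - 1) ^ k * c ^ a) • u) ⊗ₜ[K] (c ^ (b + 1) • v) := by
      calc c ^ (n + 1) • (u ⊗ₜ[K] v)
          = (((qK - 1) ^ k * c ^ a) * c ^ (b + 1)) • (u ⊗ₜ[K] v) := by rw [hsc]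
        _ = ((qK - 1) ^ k * c ^ a) • (c ^ (b + 1) • (u ⊗ₜ[K] v)) := mul_smul _ _ _
        _ = ((qK - 1) ^ k * c ^ a) • (u ⊗ₜ[K] (c ^ (b + 1) • v)) :=
            congrArg (fun z => ((qK - 1) ^ k * c ^ a) • z)
              (TensorProduct.tmul_smul (c ^ (b + 1)) u v).symm
        _ = (((qK - 1) ^ k * c ^ a) • u) ⊗ₜ[K] (c ^ (b + 1) • v) :=
            TensorProduct.smul_tmul' _ _ _
    show c ^ (n + 1) • (u ⊗ₜ[K] v) ∈ S
    rw [key]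
    have hu' : ((qK - 1) ^ k * c ^ a) • u ∈ Hvee A H := by
      have e : ((qK - 1) ^ k * c ^ a) • u = (qK - 1) ^ k • (c ^ a • u) := by
        simp only [Algebra.smul_def, _root_.map_mul, mul_assoc]
      rw [e]
      exact gpow_smul_mem A (smul_mem_Hvee A hu) k
    have hv' : c ^ (b + 1) • v ∈ Ivee A H I := smul_mem_Ivee A hv
    exact le_sup_left (α := AddSubgroup (A ⊗[K] A))
      (AddSubgroup.subset_closure ⟨_, hu', _, hv', rfl⟩)
  · have key : c ^ (n + 1) • (u ⊗ₜ[K] v)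
        = (c ^ (a + 1) • u) ⊗ₜ[K] (((qK - 1) ^ k * c ^ b) • v) := by
      calc c ^ (n + 1) • (u ⊗ₜ[K] v)
          = (((qK - 1) ^ k * c ^ b) * c ^ (a + 1)) • (u ⊗ₜ[K] v) := by rw [hsc2]
        _ = ((qK - 1) ^ k * c ^ b) • (c ^ (a + 1) • (u ⊗ₜ[K] v)) := mul_smul _ _ _
        _ = ((qK - 1) ^ k * c ^ b) • ((c ^ (a + 1) • u) ⊗ₜ[K] v) := by
            rw [TensorProduct.smul_tmul']
        _ = (c ^ (a + 1) • u) ⊗ₜ[K] (((qK - 1) ^ k * c ^ b) • v) :=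
            (TensorProduct.tmul_smul _ _ _).symm
    show c ^ (n + 1) • (u ⊗ₜ[K] v) ∈ S
    rw [key]
    have hu' : c ^ (a + 1) • u ∈ Ivee A H I := smul_mem_Ivee A hu
    have hv' : ((qK - 1) ^ k * c ^ b) • v ∈ Hvee A H := by
      have e : ((qK - 1) ^ k * c ^ b) • v = (qK - 1) ^ k • (c ^ b • v) := by
        simp only [Algebra.smul_def, _root_.map_mul, mul_assoc]
      rw [e]
      exact gpow_smul_mem A (smul_mem_Hvee A hv) k
    exact le_sup_right (α := AddSubgroup (A ⊗[K] A))
      (AddSubgroup.subset_closure ⟨_, hu', _, hv', rfl⟩)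


lemma Hvee_mul_Ivee {H I : Submodule R A} : Hvee A H * Ivee A H I ≤ Ivee A H I := by
  rw [Hvee, Submodule.iSup_mul]
  refine iSup_le fun n => ?_
  rw [Ivee, Submodule.mul_iSup]
  refine iSup_le fun m => ?_
  refine le_trans (ksmul_mul_ksmul A _ _ _ _) ?_
  have h1 : ((qK - 1)⁻¹) ^ n * ((qK - 1)⁻¹) ^ (m + 1) = ((qK - 1)⁻¹) ^ (n + m + 1) := by
    rw [← pow_add, add_assoc]
  have h2 : (Jform A H) ^ n * ((Jform A H) ^ m * I) = (Jform A H) ^ (n + m) * I := by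
    rw [← mul_assoc, ← pow_add]
  rw [h1, h2]
  exact le_iSup (fun t => ksmul A (((qK - 1)⁻¹) ^ (t + 1)) ((Jform A H) ^ t * I)) (n + m)


/-- `I_q^∨` is a left ideal and two-sided coideal of `H^∨`. -/
theorem Ivee_leftIdeal_coideal (H I : Submodule R A) (hH : IsHopfForm A H)
    (hIH : I ≤ H)
    (hIdeal : ∀ h ∈ H, ∀ x ∈ I, h * x ∈ I)
    (hcoideal : ∀ x ∈ I, Coalgebra.comul (R := K) x ∈ tsubK A H I ⊔ tsubK A I H)
    (hcounit : ∀ x ∈ I, Coalgebra.counit (R := K) x = 0) :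
    (∀ a ∈ Hvee A H, ∀ x ∈ Ivee A H I, a * x ∈ Ivee A H I) ∧
    (∀ x ∈ Ivee A H I,
      Coalgebra.comul (R := K) x ∈
        tsubK A (Hvee A H) (Ivee A H I) ⊔ tsubK A (Ivee A H I) (Hvee A H) ∧
      Coalgebra.counit (R := K) x = 0) := by
  have hJnI : ∀ n : ℕ, ∀ z ∈ (Jform A H) ^ n * I, Coalgebra.counit (R := K) z = 0 := by
    intro n z hz
    refine Submodule.mul_induction_on hz (fun a _ b hb => ?_) (fun x y hx hy => ?_)
    · rw [Bialgebra.counit_mul, hcounit b hb, mul_zero]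
    · rw [map_add, hx, hy, add_zero]
  constructor
  · intro a ha x hx
    exact Hvee_mul_Ivee A (Submodule.mul_mem_mul ha hx)
  · intro x hx
    constructor
    · refine Submodule.iSup_induction
        (fun n => ksmul A (((qK - 1)⁻¹) ^ (n + 1)) ((Jform A H) ^ n * I))
        (motive := fun y => Coalgebra.comul (R := K) y ∈
          tsubK A (Hvee A H) (Ivee A H I) ⊔ tsubK A (Ivee A H I) (Hvee A H)) hx
        (fun n y hy => ?_) ?_ ?_
      · obtain ⟨z, hz, rfl⟩ := (mem_ksmul_iff A).mp hy
        have h1 : Coalgebra.comul (R := K) (((qK - 1)⁻¹) ^ (n + 1) • z)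
            = ((qK - 1)⁻¹) ^ (n + 1) • Coalgebra.comul (R := K) z :=
          map_smul (Coalgebra.comul (R := K) (A := A)) _ _
        rw [h1]
        exact smul_W_mem A n (comul_JnI A hH hcoideal n z hz)
      · show Coalgebra.comul (R := K) (0 : A) ∈ _
        rw [map_zero]; exact zero_mem _
      · intro u v hu hv
        show Coalgebra.comul (R := K) (u + v) ∈ _
        rw [map_add]; exact add_mem hu hv
    · refine Submodule.iSup_induction
        (fun n => ksmul A (((qK - 1)⁻¹) ^ (n + 1)) ((Jform A H) ^ n * I))
        (motive := fun y => Coalgebra.counit (R := K) y = 0) hx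
        (fun n y hy => ?_) ?_ ?_
      · obtain ⟨z, hz, rfl⟩ := (mem_ksmul_iff A).mp hy
        calc Coalgebra.counit (R := K) (((qK - 1)⁻¹) ^ (n + 1) • z)
            = ((qK - 1)⁻¹) ^ (n + 1) • Coalgebra.counit (R := K) z :=
              map_smul (Coalgebra.counit (R := K) (A := A)) _ _
          _ = 0 := by rw [hJnI n z hz]; exact smul_zero _
      · show Coalgebra.counit (R := K) (0 : A) = 0
        exact map_zero _
      · intro u v hu hv
        show Coalgebra.counit (R := K) (u + v) = 0
        rw [map_add, hu, hv, add_zero]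


end GQDP
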